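/- Let M₁ ≥ f > M₂ ≥ 0 be real numbers. Then for every g ∈ 𝒜(M₁,f,M₂), one has I_g = ∫₀¹ ((1/t)·∫₀ᵗ g(u) du) dt ≤ f + (f − M₂)·log((M₁ − M₂)/(f − M₂)). -/

import Mathlib

open MeasureTheory Filter Set

noncomputable section

/-- `g` belongs to the class `𝒜(M₁, f, M₂)`: `g : [0,1) → [0,∞)` is decreasing,
left continuous on `(0,1)`, continuous at `0`, with `g 0 = M₁`,
`lim_{t→1⁻} g t = M₂` and `∫₀¹ g = f`. -/
def memA (M₁ f M₂ : ℝ) (g : ℝ → ℝ) : Prop :=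
  (∀ t ∈ Set.Ico (0 : ℝ) 1, 0 ≤ g t) ∧
  (∀ s ∈ Set.Ico (0 : ℝ) 1, ∀ t ∈ Set.Ico (0 : ℝ) 1, s ≤ t → g t ≤ g s) ∧
  (∀ t ∈ Set.Ioo (0 : ℝ) 1, Filter.Tendsto g (nhdsWithin t (Set.Iio t)) (nhds (g t))) ∧
  Filter.Tendsto g (nhdsWithin 0 (Set.Ioi 0)) (nhds (g 0)) ∧
  g 0 = M₁ ∧
  Filter.Tendsto g (nhdsWithin 1 (Set.Iio 1)) (nhds M₂) ∧
  (∫ t in Set.Ioo (0 : ℝ) 1, g t) = f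

/-- `I_g = ∫₀¹ ((1/t) ∫₀ᵗ g(u) du) dt`. -/
def Ig (g : ℝ → ℝ) : ℝ :=
  ∫ t in Set.Ioo (0 : ℝ) 1, (1 / t) * ∫ u in Set.Ioo (0 : ℝ) t, g u

theorem stmt8 (f M₁ M₂ : ℝ) (h1 : M₁ ≥ f) (h2 : f > M₂) (h3 : M₂ ≥ 0)
    (g : ℝ → ℝ) (hg : memA M₁ f M₂ g) :
    Ig g ≤ f + (f - M₂) * Real.log ((M₁ - M₂) / (f - M₂)) := by
  obtain ⟨hnn, hanti, -, -, hg0, hlim, hint⟩ := hg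
  have hM12 : (0:ℝ) < M₁ - M₂ := by linarith
  have hfM2 : (0:ℝ) < f - M₂ := by linarith
  have hM1pos : (0:ℝ) < M₁ := by linarith
  set a : ℝ := (f - M₂) / (M₁ - M₂) with ha_def
  have ha0 : 0 < a := div_pos hfM2 hM12
  have ha1 : a ≤ 1 := by rw [ha_def, div_le_one hM12]; linarith
  have haM : a * (M₁ - M₂) = f - M₂ := div_mul_cancel₀ _ hM12.ne'
  -- upper and lower bounds for g on [0,1)
  have hub : ∀ t ∈ Ico (0:ℝ) 1, g t ≤ M₁ := fun t ht =>
    hg0 ▸ hanti 0 ⟨le_refl 0, one_pos⟩ t ht ht.1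
  have hlb : ∀ t ∈ Ico (0:ℝ) 1, M₂ ≤ g t := by
    intro t ht
    refine le_of_tendsto hlim ?_
    filter_upwards [Ioo_mem_nhdsLT_of_mem ⟨ht.2, le_refl 1⟩] with u hu
    exact hanti t ht u ⟨ht.1.trans hu.1.le, hu.2⟩ hu.1.le
  -- integrability of g on (0,1)
  have hmeas : AEMeasurable g (volume.restrict (Ioo (0:ℝ) 1)) := by
    refine AEMeasurable.mono_measure
      (aemeasurable_restrict_of_antitoneOn measurableSet_Ico
        (fun s hs t ht hst => hanti s hs t ht hst))
      (Measure.restrict_mono Ioo_subset_Ico_self le_rfl)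
  have hvol : volume (Ioo (0:ℝ) 1) < ⊤ := by
    rw [Real.volume_Ioo]; exact ENNReal.ofReal_lt_top
  have hconst : ∀ (c : ℝ) (s : Set ℝ), volume s < ⊤ → IntegrableOn (fun _ : ℝ => c) s := by
    intro c s hs
    exact integrableOn_const hs.ne
  have hgint : IntegrableOn g (Ioo (0:ℝ) 1) := by
    refine Integrable.mono' (hconst M₁ _ hvol) hmeas.aestronglyMeasurable ?_
    filter_upwards [ae_restrict_mem measurableSet_Ioo] with t ht
    rw [Real.norm_eq_abs, abs_le]
    have h1 := hub t ⟨ht.1.le, ht.2⟩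
    have h2 := hlb t ⟨ht.1.le, ht.2⟩
    constructor <;> linarith
  set G : ℝ → ℝ := fun t => ∫ u in Ioo (0:ℝ) t, g u with hG_def
  -- G is monotone on [0,1]
  have hGmono : MonotoneOn G (Icc (0:ℝ) 1) := by
    intro s hs t ht hst
    refine setIntegral_mono_set (hgint.mono_set (Ioo_subset_Ioo_right ht.2)) ?_
      ((Ioo_subset_Ioo_right hst).eventuallyLE)
    filter_upwards [ae_restrict_mem measurableSet_Ioo] with u hu
    exact hnn u ⟨hu.1.le, hu.2.trans_le ht.2⟩
  have hGnn : ∀ t ∈ Ioo (0:ℝ) 1, 0 ≤ G t := by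
    intro t ht
    exact setIntegral_nonneg measurableSet_Ioo fun u hu => hnn u ⟨hu.1.le, hu.2.trans ht.2⟩
  -- G t ≤ M₁ * t
  have hGub1 : ∀ t ∈ Ioo (0:ℝ) 1, G t ≤ M₁ * t := by
    intro t ht
    have h : G t ≤ ∫ _ in Ioo (0:ℝ) t, M₁ :=
      setIntegral_mono_on (hgint.mono_set (Ioo_subset_Ioo_right ht.2.le))
        (hconst M₁ _ (by rw [Real.volume_Ioo]; exact ENNReal.ofReal_lt_top))
        measurableSet_Ioo (fun u hu => hub u ⟨hu.1.le, hu.2.trans ht.2⟩)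
    rw [setIntegral_const, Real.volume_real_Ioo_of_le (by linarith [ht.1] : (0:ℝ) ≤ t),
      smul_eq_mul] at h
    linarith [h]
  -- G t ≤ f - M₂ * (1 - t)
  have hGub2 : ∀ t ∈ Ioo (0:ℝ) 1, G t ≤ f - M₂ * (1 - t) := by
    intro t ht
    have hico : IntegrableOn g (Ico t 1) :=
      hgint.mono_set fun u hu => ⟨ht.1.trans_le hu.1, hu.2⟩
    have hdisj : Disjoint (Ioo (0:ℝ) t) (Ico t 1) :=
      Set.disjoint_left.mpr fun u hu h2u => absurd h2u.1 (not_le.2 hu.2)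
    have hsplit : G t + (∫ u in Ico t 1, g u) = f := by
      rw [hG_def]
      rw [← setIntegral_union hdisj measurableSet_Ico
        (hgint.mono_set (Ioo_subset_Ioo_right ht.2.le)) hico,
        Ioo_union_Ico_eq_Ioo ht.1 ht.2.le, hint]
    have hlow : M₂ * (1 - t) ≤ ∫ u in Ico t 1, g u := by
      have h : (∫ _ in Ico t 1, M₂) ≤ ∫ u in Ico t 1, g u :=
        setIntegral_mono_on
          (hconst M₂ _ (by rw [Real.volume_Ico]; exact ENNReal.ofReal_lt_top)) hico
          measurableSet_Ico (fun u hu => hlb u ⟨ht.1.le.trans hu.1, hu.2⟩)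
      rw [setIntegral_const,
        Real.volume_real_Ico_of_le (by linarith [ht.2] : t ≤ 1), smul_eq_mul] at h
      linarith [h]
    linarith [hsplit, hlow]
  -- the majorant
  set h : ℝ → ℝ := fun t => min M₁ ((f - M₂) * (1/t) + M₂) with hh_def
  -- measurability / integrability of the integrand of Ig
  have hGmeas : AEMeasurable G (volume.restrict (Ioo (0:ℝ) 1)) :=
    (aemeasurable_restrict_of_monotoneOn measurableSet_Icc hGmono).mono_measure
      (Measure.restrict_mono Ioo_subset_Icc_self le_rfl)
  have hFub : ∀ t ∈ Ioo (0:ℝ) 1, (1/t) * G t ≤ M₁ := by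
    intro t ht
    have ht0 : 0 < t := ht.1
    have ht' : t ≠ 0 := ht0.ne'
    have h1 : (1/t) * G t ≤ (1/t) * (M₁ * t) :=
      mul_le_mul_of_nonneg_left (hGub1 t ht) (by positivity)
    have h2 : (1/t) * (M₁ * t) = M₁ := by field_simp
    linarith
  have hFnn : ∀ t ∈ Ioo (0:ℝ) 1, 0 ≤ (1/t) * G t := by
    intro t ht
    have ht0 : 0 < t := ht.1
    have := hGnn t ht
    positivity
  have hFint : IntegrableOn (fun t => (1/t) * G t) (Ioo (0:ℝ) 1) := by
    refine Integrable.mono' (hconst M₁ _ hvol)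
      (((measurable_const.div measurable_id).aemeasurable.mul hGmeas).aestronglyMeasurable) ?_
    filter_upwards [ae_restrict_mem measurableSet_Ioo] with t ht
    rw [Real.norm_eq_abs, abs_of_nonneg (hFnn t ht)]
    exact hFub t ht
  have hhmeas : Measurable h := by
    apply measurable_const.min
    exact (measurable_const.mul (measurable_const.div measurable_id)).add measurable_const
  have hhint : IntegrableOn h (Ioo (0:ℝ) 1) := by
    refine Integrable.mono' (hconst M₁ _ hvol) hhmeas.aestronglyMeasurable ?_
    filter_upwards [ae_restrict_mem measurableSet_Ioo] with t ht
    have ht0 : 0 < t := ht.1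
    have hnn2 : (0:ℝ) ≤ (f - M₂) * (1/t) + M₂ := by positivity
    rw [Real.norm_eq_abs, abs_of_nonneg (le_min hM1pos.le hnn2)]
    exact min_le_left _ _
  -- Ig ≤ ∫ h
  have hmain : Ig g ≤ ∫ t in Ioo (0:ℝ) 1, h t := by
    refine setIntegral_mono_on hFint hhint measurableSet_Ioo ?_
    intro t ht
    have ht0 : 0 < t := ht.1
    have ht' : t ≠ 0 := ht0.ne'
    refine le_min (hFub t ht) ?_
    have hq1 : (1/t) * G t ≤ (1/t) * (f - M₂ * (1 - t)) :=
      mul_le_mul_of_nonneg_left (hGub2 t ht) (by positivity)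
    have hq2 : (1/t) * (f - M₂ * (1 - t)) = (f - M₂) * (1/t) + M₂ := by
      field_simp
      ring
    linarith
  -- split the integral of h at a
  have hdisj2 : Disjoint (Ioo (0:ℝ) a) (Ico a 1) :=
    Set.disjoint_left.mpr fun u hu h2u => absurd h2u.1 (not_le.2 hu.2)
  have hsplit2 : (∫ t in Ioo (0:ℝ) 1, h t)
      = (∫ t in Ioo (0:ℝ) a, h t) + ∫ t in Ico a 1, h t := by
    rw [← setIntegral_union hdisj2 measurableSet_Ico
      (hhint.mono_set (Ioo_subset_Ioo_right ha1))
      (hhint.mono_set fun u hu => ⟨ha0.trans_le hu.1, hu.2⟩),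
      Ioo_union_Ico_eq_Ioo ha0 ha1]
  -- value on (0, a): h = M₁
  have hval1 : (∫ t in Ioo (0:ℝ) a, h t) = a * M₁ := by
    have heq : ∀ t ∈ Ioo (0:ℝ) a, h t = M₁ := by
      intro t ht
      have hq1 : t * (M₁ - M₂) ≤ f - M₂ := by nlinarith [ht.2, ht.1, haM]
      have hq2 : M₁ - M₂ ≤ (f - M₂) * (1/t) := by
        rw [mul_one_div, le_div_iff₀ ht.1]; linarith
      exact min_eq_left (by linarith)
    rw [setIntegral_congr_fun measurableSet_Ioo heq, setIntegral_const,
      Real.volume_real_Ioo_of_le (by linarith [ha0] : (0:ℝ) ≤ a), smul_eq_mul]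
    ring
  -- value on [a, 1)
  have hval2 : (∫ t in Ico a 1, h t)
      = (f - M₂) * Real.log (1/a) + M₂ * (1 - a) := by
    have heq : ∀ t ∈ Ico a 1, h t = (f - M₂) * (1/t) + M₂ := by
      intro t ht
      have hq1 : f - M₂ ≤ t * (M₁ - M₂) := by nlinarith [ht.1, haM]
      have hq2 : (f - M₂) * (1/t) ≤ M₁ - M₂ := by
        rw [mul_one_div, div_le_iff₀ (ha0.trans_le ht.1)]; linarith
      exact min_eq_right (by linarith)
    have hioc : (∫ t in Ico a 1, ((f - M₂) * (1/t) + M₂))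
        = ∫ t in a..1, ((f - M₂) * (1/t) + M₂) := by
      rw [intervalIntegral.integral_of_le ha1, integral_Ico_eq_integral_Ioo,
        integral_Ioc_eq_integral_Ioo]
    have hzero : (0:ℝ) ∉ Set.uIcc a 1 := by
      rw [Set.uIcc_of_le ha1]
      exact fun hc => absurd hc.1 (not_le.2 ha0)
    have hii : IntervalIntegrable (fun t : ℝ => (f - M₂) * (1/t)) volume a 1 := by
      apply IntervalIntegrable.const_mul
      exact intervalIntegral.intervalIntegrable_one_div
        (fun x hx => by rintro rfl; exact hzero hx) continuousOn_id
    rw [setIntegral_congr_fun measurableSet_Ico heq, hioc,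
      intervalIntegral.integral_add hii (continuous_const.intervalIntegrable a 1),
      intervalIntegral.integral_const_mul, integral_one_div hzero,
      intervalIntegral.integral_const, smul_eq_mul]
    ring
  -- put everything together
  have hloga : Real.log (1/a) = Real.log ((M₁ - M₂) / (f - M₂)) := by
    rw [ha_def, one_div_div]
  have hfa : a * M₁ + M₂ * (1 - a) = f := by
    have hq := haM
    ring_nf at hq ⊢
    linarith [hq]
  rw [hsplit2, hval1, hval2, hloga] at hmain
  linarith
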